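/- Let G be a finite simple graph that is C_3-free, C_5-free and C_6-free. If R is a minimal redundant set of G containing exactly 3 redundant vertices (|red(R)| = 3), then |R| = 3. -/

import Mathlib

open Set SimpleGraph

variable {V : Type*}

/-- The closed neighborhood `N[v]` of a vertex. -/
def closedNbr (G : SimpleGraph V) (v : V) : Set V := insert v (G.neighborSet v)

/-- Private neighbors of `x` with respect to `I`. -/
def privSet (G : SimpleGraph V) (x : V) (I : Set V) : Set V :=
  {y ∈ closedNbr G x | closedNbr G y ∩ I = {x}}

/-- A set is irredundant if every element has a private neighbor. -/
def Irred (G : SimpleGraph V) (I : Set V) : Prop := ∀ x ∈ I, (privSet G x I).Nonempty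

/-- A maximal irredundant set. -/
def MaxIrred (G : SimpleGraph V) (I : Set V) : Prop :=
  Irred G I ∧ ∀ J : Set V, Irred G J → I ⊆ J → J = I

def Redundant (G : SimpleGraph V) (R : Set V) : Prop := ¬ Irred G R

def MinRedundant (G : SimpleGraph V) (R : Set V) : Prop :=
  Redundant G R ∧ ∀ S : Set V, S ⊂ R → ¬ Redundant G S

/-- The set of redundant vertices of a set. -/
def redVerts (G : SimpleGraph V) (R : Set V) : Set V := {x ∈ R | privSet G x R = ∅}

def Dominating (G : SimpleGraph V) (D : Set V) : Prop := ∀ v : V, ∃ d ∈ D, v ∈ closedNbr G d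

def MinDominating (G : SimpleGraph V) (D : Set V) : Prop :=
  Dominating G D ∧ ∀ S : Set V, S ⊂ D → ¬ Dominating G S

/-- Vertices at distance at most 2 from `x`. -/
def ball2 (G : SimpleGraph V) (x : V) : Set V :=
  {y | y = x ∨ G.Adj x y ∨ ∃ w, G.Adj x w ∧ G.Adj w y}

/-- Vertices at distance exactly 2 from `x`. -/
def sphere2 (G : SimpleGraph V) (x : V) : Set V :=
  {y | y ≠ x ∧ ¬ G.Adj x y ∧ ∃ w, G.Adj x w ∧ G.Adj w y}

/-- `G` contains no induced cycle of length `k`. -/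
def CFree (G : SimpleGraph V) (k : ℕ) : Prop :=
  IsEmpty (SimpleGraph.cycleGraph k ↪g G)

/-- `S` dominates `B` through open neighborhoods. -/
def DomOver (G : SimpleGraph V) (S B : Set V) : Prop := ∀ b ∈ B, ∃ s ∈ S, G.Adj s b

def MinDomOver (G : SimpleGraph V) (S B : Set V) : Prop :=
  DomOver G S B ∧ ∀ S' : Set V, S' ⊂ S → ¬ DomOver G S' B

/-- `N(Y)`, the union of open neighborhoods of elements of `Y`. -/
def nbrUnion (G : SimpleGraph V) (Y : Set V) : Set V := ⋃ y ∈ Y, G.neighborSet y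

/-- Private edges of `x` with respect to `I` in a hypergraph. -/
def hypPriv (H : Set (Set V)) (x : V) (I : Set V) : Set (Set V) := {E ∈ H | E ∩ I = {x}}

def HypIrred (H : Set (Set V)) (I : Set V) : Prop := ∀ x ∈ I, (hypPriv H x I).Nonempty

def HypMaxIrred (H : Set (Set V)) (I : Set V) : Prop :=
  HypIrred H I ∧ ∀ J : Set V, HypIrred H J → I ⊆ J → J = I

/-- The trace of a hypergraph on a set `S`. -/
def htrace (H : Set (Set V)) (S : Set V) : Set (Set V) :=
  {F | ∃ E ∈ H, F = E ∩ S ∧ (E ∩ S).Nonempty}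

/-- The closed-neighborhood hypergraph of a graph. -/
def nbrHyp (G : SimpleGraph V) : Set (Set V) := Set.range (closedNbr G)

/-- The first `i` vertices in the ordering `v` (zero-based: `v 0, …, v (i-1)`). -/
def firstVerts (v : ℕ → V) (i : ℕ) : Set V := {x | ∃ j < i, v j = x}

/-- The incidence co-bipartite graph of the closed-neighborhood hypergraph of `G`:
`Sum.inl` is the vertex side `V`, `Sum.inr` is the copy `U`. -/
def cobip (G : SimpleGraph V) : SimpleGraph (V ⊕ V) :=
  SimpleGraph.fromRel (fun a b => match a, b with
    | Sum.inl _, Sum.inl _ => True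
    | Sum.inr _, Sum.inr _ => True
    | Sum.inl a, Sum.inr b => a = b ∨ G.Adj a b
    | Sum.inr _, Sum.inl _ => False)

lemma mem_closedNbr_iff {G : SimpleGraph V} {u v : V} :
    u ∈ closedNbr G v ↔ u = v ∨ G.Adj v u := by
  simp [closedNbr]

def Link (G : SimpleGraph V) (R : Set V) (u v : V) : Prop :=
  G.Adj u v ∨ ∃ m, G.Adj u m ∧ G.Adj m v ∧ closedNbr G m ∩ R = {u, v}

lemma linkSymm {G : SimpleGraph V} {R : Set V} {u v : V} (h : Link G R u v) :
    Link G R v u := by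
  rcases h with h | ⟨m, h1, h2, h3⟩
  · exact Or.inl h.symm
  · exact Or.inr ⟨m, h2.symm, h1.symm, by rw [h3, Set.pair_comm]⟩

lemma pair_fst {u v s t : V} (h : ({u, v} : Set V) = {s, t}) : u = s ∨ u = t := by
  have : u ∈ ({s, t} : Set V) := h ▸ Set.mem_insert u {v}
  simpa using this

lemma midFacts {G : SimpleGraph V} {R : Set V} {m u v w : V}
    (hm : closedNbr G m ∩ R = {u, v}) (hw : w ∈ R) (hwu : w ≠ u) (hwv : w ≠ v) :
    ¬G.Adj m w ∧ m ≠ w := by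
  have key : w ∉ closedNbr G m := by
    intro h
    have h2 : w ∈ closedNbr G m ∩ R := ⟨h, hw⟩
    rw [hm] at h2
    rcases h2 with h' | h'
    · exact hwu h'
    · exact hwv h'
  exact ⟨fun h => key (mem_closedNbr_iff.mpr (Or.inr h)),
    fun h => key (mem_closedNbr_iff.mpr (Or.inl h.symm))⟩

lemma noC3 {G : SimpleGraph V} (h : CFree G 3) {a b c : V}
    (hab : G.Adj a b) (hbc : G.Adj b c) (hca : G.Adj c a) : False := by
  have nab := hab.ne; have nbc := hbc.ne; have nca := hca.ne
  have hba := hab.symm; have hcb := hbc.symm; have hac := hca.symm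
  have nba := hba.ne; have ncb := hcb.ne; have nac := hac.ne
  apply h.false
  refine ⟨⟨![a,b,c], ?_⟩, ?_⟩
  · intro i j hij
    fin_cases i <;> fin_cases j <;>
      first | rfl | exact absurd hij (by assumption)
  · intro i j
    fin_cases i <;> fin_cases j <;>
      first
      | exact iff_of_true (by assumption) (by decide)
      | exact iff_of_false G.irrefl (by decide)

lemma noC5 {G : SimpleGraph V} (h : CFree G 5) {a b c d e : V}
    (hab : G.Adj a b) (hbc : G.Adj b c) (hcd : G.Adj c d) (hde : G.Adj d e) (hea : G.Adj e a)
    (hac : ¬G.Adj a c) (had : ¬G.Adj a d) (hbd : ¬G.Adj b d) (hbe : ¬G.Adj b e)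
    (hce : ¬G.Adj c e)
    (nac : a ≠ c) (nad : a ≠ d) (nbd : b ≠ d) (nbe : b ≠ e) (nce : c ≠ e) : False := by
  have nab := hab.ne; have nbc := hbc.ne; have ncd := hcd.ne; have nde := hde.ne
  have nea := hea.ne
  have hba := hab.symm; have hcb := hbc.symm; have hdc := hcd.symm; have hed := hde.symm
  have hae := hea.symm
  have nba := hba.ne; have ncb := hcb.ne; have ndc := hdc.ne; have ned := hed.ne
  have nae := hae.ne
  have hca : ¬G.Adj c a := fun h' => hac h'.symm
  have hda : ¬G.Adj d a := fun h' => had h'.symm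
  have hdb : ¬G.Adj d b := fun h' => hbd h'.symm
  have heb : ¬G.Adj e b := fun h' => hbe h'.symm
  have hec : ¬G.Adj e c := fun h' => hce h'.symm
  have nca := nac.symm; have nda := nad.symm; have ndb := nbd.symm
  have neb := nbe.symm; have nec := nce.symm
  apply h.false
  refine ⟨⟨![a,b,c,d,e], ?_⟩, ?_⟩
  · intro i j hij
    fin_cases i <;> fin_cases j <;>
      first | rfl | exact absurd hij (by assumption)
  · intro i j
    fin_cases i <;> fin_cases j <;>
      first
      | exact iff_of_true (by assumption) (by decide)
      | exact iff_of_false G.irrefl (by decide)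
      | exact iff_of_false (by assumption) (by decide)

set_option maxHeartbeats 1000000 in
lemma noC6 {G : SimpleGraph V} (h : CFree G 6) {a b c d e f : V}
    (hab : G.Adj a b) (hbc : G.Adj b c) (hcd : G.Adj c d) (hde : G.Adj d e) (hef : G.Adj e f)
    (hfa : G.Adj f a)
    (hac : ¬G.Adj a c) (had : ¬G.Adj a d) (hae : ¬G.Adj a e) (hbd : ¬G.Adj b d)
    (hbe : ¬G.Adj b e) (hbf : ¬G.Adj b f) (hce : ¬G.Adj c e) (hcf : ¬G.Adj c f)
    (hdf : ¬G.Adj d f)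
    (nac : a ≠ c) (nad : a ≠ d) (nae : a ≠ e) (nbd : b ≠ d) (nbe : b ≠ e) (nbf : b ≠ f)
    (nce : c ≠ e) (ncf : c ≠ f) (ndf : d ≠ f) : False := by
  have nab := hab.ne; have nbc := hbc.ne; have ncd := hcd.ne; have nde := hde.ne
  have nef := hef.ne; have nfa := hfa.ne
  have hba := hab.symm; have hcb := hbc.symm; have hdc := hcd.symm; have hed := hde.symm
  have hfe := hef.symm; have haf := hfa.symm
  have nba := hba.ne; have ncb := hcb.ne; have ndc := hdc.ne; have ned := hed.ne
  have nfe := hfe.ne; have naf := haf.ne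
  have hca : ¬G.Adj c a := fun h' => hac h'.symm
  have hda : ¬G.Adj d a := fun h' => had h'.symm
  have hea : ¬G.Adj e a := fun h' => hae h'.symm
  have hdb : ¬G.Adj d b := fun h' => hbd h'.symm
  have heb : ¬G.Adj e b := fun h' => hbe h'.symm
  have hfb : ¬G.Adj f b := fun h' => hbf h'.symm
  have hec : ¬G.Adj e c := fun h' => hce h'.symm
  have hfc : ¬G.Adj f c := fun h' => hcf h'.symm
  have hfd : ¬G.Adj f d := fun h' => hdf h'.symm
  have nca := nac.symm; have nda := nad.symm; have nea := nae.symm; have ndb := nbd.symm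
  have neb := nbe.symm; have nfb := nbf.symm; have nec := nce.symm; have nfc := ncf.symm
  have nfd := ndf.symm
  apply h.false
  refine ⟨⟨![a,b,c,d,e,f], ?_⟩, ?_⟩
  · intro i j hij
    fin_cases i <;> fin_cases j <;>
      first | rfl | exact absurd hij (by assumption)
  · intro i j
    fin_cases i <;> fin_cases j <;>
      first
      | exact iff_of_true (by assumption) (by decide)
      | exact iff_of_false G.irrefl (by decide)
      | exact iff_of_false (by assumption) (by decide)

lemma linkC5 {G : SimpleGraph V} (h3 : CFree G 3) (h5 : CFree G 5) {R : Set V} {u v w : V}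
    (hu : u ∈ R) (hv : v ∈ R)
    (nuv : u ≠ v) (nvw : v ≠ w) (nuw : u ≠ w)
    (auv : G.Adj u v) (avw : ¬G.Adj v w) (auw : ¬G.Adj u w)
    (Lvw : Link G R v w) (Lwu : Link G R w u) : False := by
  obtain ⟨m2, hvm2, hm2w, hS2⟩ := Lvw.resolve_left avw
  obtain ⟨m3, hwm3, hm3u, hS3⟩ := Lwu.resolve_left (fun h => auw h.symm)
  have hum2 := midFacts hS2 hu nuv nuw
  have hvm3 := midFacts hS3 hv nvw nuv.symm
  have nm2m3 : m2 ≠ m3 := by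
    intro h
    rw [h] at hS2
    rcases pair_fst (hS2.symm.trans hS3) with h' | h'
    · exact nvw h'
    · exact nuv h'.symm
  exact noC5 h5 auv hvm2 hm2w hwm3 hm3u
    (fun h => hum2.1 h.symm) auw avw (fun h => hvm3.1 h.symm)
    (fun h => noC3 h3 h hwm3.symm hm2w.symm)
    hum2.2.symm nuw nvw hvm3.2.symm nm2m3

lemma linkC6 {G : SimpleGraph V} (h3 : CFree G 3) (h6 : CFree G 6) {R : Set V} {u v w : V}
    (hu : u ∈ R) (hv : v ∈ R) (hw : w ∈ R)
    (nuv : u ≠ v) (nvw : v ≠ w) (nuw : u ≠ w)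
    (auv : ¬G.Adj u v) (avw : ¬G.Adj v w) (auw : ¬G.Adj u w)
    (Luv : Link G R u v) (Lvw : Link G R v w) (Lwu : Link G R w u) : False := by
  obtain ⟨m1, hum1, hm1v, hS1⟩ := Luv.resolve_left auv
  obtain ⟨m2, hvm2, hm2w, hS2⟩ := Lvw.resolve_left avw
  obtain ⟨m3, hwm3, hm3u, hS3⟩ := Lwu.resolve_left (fun h => auw h.symm)
  have hwm1 := midFacts hS1 hw nuw.symm nvw.symm
  have hum2 := midFacts hS2 hu nuv nuw
  have hvm3 := midFacts hS3 hv nvw nuv.symm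
  have nm1m2 : m1 ≠ m2 := by
    intro h; rw [h] at hS1
    rcases pair_fst (hS1.symm.trans hS2) with h' | h'
    · exact nuv h'
    · exact nuw h'
  have nm1m3 : m1 ≠ m3 := by
    intro h; rw [h] at hS1
    rcases pair_fst (Set.pair_comm u v ▸ hS1.symm.trans hS3) with h' | h'
    · exact nvw h'
    · exact nuv h'.symm
  have nm2m3 : m2 ≠ m3 := by
    intro h; rw [h] at hS2
    rcases pair_fst (hS2.symm.trans hS3) with h' | h'
    · exact nvw h'
    · exact nuv h'.symm
  exact noC6 h6 hum1 hm1v hvm2 hm2w hwm3 hm3u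
    auv (fun h => hum2.1 h.symm) auw
    (fun h => noC3 h3 h hvm2.symm hm1v.symm)
    hwm1.1
    (fun h => noC3 h3 h hm3u hum1)
    avw (fun h => hvm3.1 h.symm)
    (fun h => noC3 h3 h hwm3.symm hm2w.symm)
    nuv hum2.2.symm nuw nm1m2 hwm1.2 nm1m3 nvw hvm3.2.symm nm2m3

lemma linkTwo {G : SimpleGraph V} (h3 : CFree G 3) (h5 : CFree G 5) (h6 : CFree G 6)
    {R : Set V} {u v w : V} (hu : u ∈ R) (hv : v ∈ R) (hw : w ∈ R)
    (nuv : u ≠ v) (nvw : v ≠ w) (nuw : u ≠ w)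
    (Luv : Link G R u v) (Lvw : Link G R v w) (Luw : Link G R u w) :
    (G.Adj u v ∧ G.Adj v w ∧ ¬G.Adj u w) ∨ (G.Adj u v ∧ ¬G.Adj v w ∧ G.Adj u w) ∨
    (¬G.Adj u v ∧ G.Adj v w ∧ G.Adj u w) := by
  by_cases A : G.Adj u v <;> by_cases B : G.Adj v w <;> by_cases C : G.Adj u w
  · exact (noC3 h3 A B C.symm).elim
  · tauto
  · tauto
  · exact (linkC5 h3 h5 hu hv nuv nvw nuw A B C Lvw (linkSymm Luw)).elim
  · tauto
  · exact (linkC5 h3 h5 hv hw nvw nuw.symm nuv.symm B (fun h => C h.symm)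
      (fun h => A h.symm) (linkSymm Luw) Luv).elim
  · exact (linkC5 h3 h5 hw hu nuw.symm nuv nvw.symm C.symm A (fun h => B h.symm)
      Luv Lvw).elim
  · exact (linkC6 h3 h6 hu hv hw nuv nvw nuw A B C Luv Lvw (linkSymm Luw)).elim

lemma getPair {G : SimpleGraph V} {R : Set V} (hR : MinRedundant G R) {z t : V}
    (hz : z ∈ R) (ht : t ∈ R) (hne : t ≠ z) (hpriv : privSet G t R = ∅) :
    ∃ q, q ∈ closedNbr G t ∧ closedNbr G q ∩ R = {z, t} := by
  have hss : R \ {z} ⊂ R := Set.sdiff_singleton_ssubset.mpr hz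
  have hirr : Irred G (R \ {z}) := not_not.mp (hR.2 _ hss)
  obtain ⟨q, hq1, hq2⟩ := hirr t ⟨ht, hne⟩
  refine ⟨q, hq1, ?_⟩
  have hne' : closedNbr G q ∩ R ≠ {t} := by
    intro h
    have : q ∈ privSet G t R := ⟨hq1, h⟩
    rw [hpriv] at this
    exact this
  have hzq : z ∈ closedNbr G q := by
    by_contra hzq
    apply hne'
    apply Set.Subset.antisymm
    · intro a ha
      have : a ∈ closedNbr G q ∩ (R \ {z}) := ⟨ha.1, ha.2, fun h => hzq (h ▸ ha.1)⟩
      rw [hq2] at this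
      exact this
    · intro a ha
      rw [Set.mem_singleton_iff] at ha
      subst ha
      have : a ∈ closedNbr G q ∩ (R \ {z}) := by rw [hq2]; rfl
      exact ⟨this.1, ht⟩
  apply Set.Subset.antisymm
  · intro a ha
    by_cases haz : a = z
    · exact Or.inl haz
    · have : a ∈ closedNbr G q ∩ (R \ {z}) := ⟨ha.1, ha.2, haz⟩
      rw [hq2] at this
      exact Or.inr this
  · rintro a (rfl | rfl)
    · exact ⟨hzq, hz⟩
    · have : a ∈ closedNbr G q ∩ (R \ {z}) := by rw [hq2]; rfl
      exact ⟨this.1, ht⟩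

lemma mkLink {G : SimpleGraph V} {R : Set V} {z t q : V} (hne : z ≠ t)
    (hq1 : q ∈ closedNbr G t) (hq2 : closedNbr G q ∩ R = {z, t}) (hzR : z ∈ R) :
    Link G R z t := by
  by_cases hA : G.Adj z t
  · exact Or.inl hA
  · have hzq : z ∈ closedNbr G q := by
      have : z ∈ closedNbr G q ∩ R := by rw [hq2]; exact Or.inl rfl
      exact this.1
    rcases mem_closedNbr_iff.mp hq1 with h | htq
    · subst h
      rcases mem_closedNbr_iff.mp hzq with h' | h'
      · exact absurd h' hne
      · exact absurd h'.symm hA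
    · rcases mem_closedNbr_iff.mp hzq with h' | h'
      · subst h'
        exact absurd htq.symm hA
      · exact Or.inr ⟨q, h'.symm, htq.symm, hq2⟩

lemma finalStep {G : SimpleGraph V} (h3 : CFree G 3) {R : Set V} {x yi yj yk p : V}
    (hyjR : yj ∈ R) (hykR : yk ∈ R)
    (njx : yj ≠ x) (nji : yj ≠ yi) (nkx : yk ≠ x) (nki : yk ≠ yi)
    (axi : G.Adj x yi) (axj : G.Adj x yj) (bik : G.Adj yi yk)
    (hp1 : p ∈ closedNbr G yi) (hp2 : closedNbr G p ∩ R = {x, yi}) : False := by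
  have hpx : p ≠ x := by
    rintro rfl
    have h2 : yj ∈ closedNbr G p ∩ R := ⟨mem_closedNbr_iff.mpr (Or.inr axj), hyjR⟩
    rw [hp2] at h2
    rcases h2 with h | h
    · exact njx h
    · exact nji h
  have hpyi : p ≠ yi := by
    rintro rfl
    have h2 : yk ∈ closedNbr G p ∩ R := ⟨mem_closedNbr_iff.mpr (Or.inr bik), hykR⟩
    rw [hp2] at h2
    rcases h2 with h | h
    · exact nkx h
    · exact nki h
  have hx : x ∈ closedNbr G p := by
    have h2 : x ∈ ({x, yi} : Set V) := Or.inl rfl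
    rw [← hp2] at h2
    exact h2.1
  rcases mem_closedNbr_iff.mp hx with h | hpx'
  · exact hpx h.symm
  rcases mem_closedNbr_iff.mp hp1 with h | hyip
  · exact hpyi h
  exact noC3 h3 axi hyip hpx'

/-- in a `(C₃, C₅, C₆)`-free graph, a minimal redundant set with exactly 3
redundant vertices has exactly 3 elements. -/
theorem stmt14 [Fintype V] (G : SimpleGraph V) (h3 : CFree G 3) (h5 : CFree G 5)
    (h6 : CFree G 6) (R : Set V) (hR : MinRedundant G R)
    (hred : (redVerts G R).ncard = 3) :
    R.ncard = 3 := by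
  classical
  obtain ⟨y1, y2, y3, n12, n13, n23, heq⟩ := Set.ncard_eq_three.mp hred
  by_contra hcon
  have hsub : redVerts G R ⊆ R := fun z hz => hz.1
  have hex : ¬ R ⊆ redVerts G R := by
    intro h
    exact hcon (by rw [Set.Subset.antisymm h hsub]; exact hred)
  obtain ⟨x, hxR, hxn⟩ := Set.not_subset.mp hex
  have hy1 : y1 ∈ redVerts G R := by rw [heq]; exact Or.inl rfl
  have hy2 : y2 ∈ redVerts G R := by rw [heq]; exact Or.inr (Or.inl rfl)
  have hy3 : y3 ∈ redVerts G R := by rw [heq]; exact Or.inr (Or.inr rfl)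
  have hy1R : y1 ∈ R := hy1.1
  have hy2R : y2 ∈ R := hy2.1
  have hy3R : y3 ∈ R := hy3.1
  have hpr1 : privSet G y1 R = ∅ := hy1.2
  have hpr2 : privSet G y2 R = ∅ := hy2.2
  have hpr3 : privSet G y3 R = ∅ := hy3.2
  have nx1 : x ≠ y1 := fun h => hxn (h ▸ hy1)
  have nx2 : x ≠ y2 := fun h => hxn (h ▸ hy2)
  have nx3 : x ≠ y3 := fun h => hxn (h ▸ hy3)
  obtain ⟨p1, hp11, hp12⟩ := getPair hR hxR hy1R nx1.symm hpr1
  obtain ⟨p2, hp21, hp22⟩ := getPair hR hxR hy2R nx2.symm hpr2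
  obtain ⟨p3, hp31, hp32⟩ := getPair hR hxR hy3R nx3.symm hpr3
  obtain ⟨q12, hq121, hq122⟩ := getPair hR hy1R hy2R n12.symm hpr2
  obtain ⟨q13, hq131, hq132⟩ := getPair hR hy1R hy3R n13.symm hpr3
  obtain ⟨q23, hq231, hq232⟩ := getPair hR hy2R hy3R n23.symm hpr3
  have Lx1 : Link G R x y1 := mkLink nx1 hp11 hp12 hxR
  have Lx2 : Link G R x y2 := mkLink nx2 hp21 hp22 hxR
  have Lx3 : Link G R x y3 := mkLink nx3 hp31 hp32 hxR
  have L12 : Link G R y1 y2 := mkLink n12 hq121 hq122 hy1R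
  have L13 : Link G R y1 y3 := mkLink n13 hq131 hq132 hy1R
  have L23 : Link G R y2 y3 := mkLink n23 hq231 hq232 hy2R
  have E12 := linkTwo h3 h5 h6 hxR hy1R hy2R nx1 n12 nx2 Lx1 L12 Lx2
  have E13 := linkTwo h3 h5 h6 hxR hy1R hy3R nx1 n13 nx3 Lx1 L13 Lx3
  have E23 := linkTwo h3 h5 h6 hxR hy2R hy3R nx2 n23 nx3 Lx2 L23 Lx3
  have EY := linkTwo h3 h5 h6 hy1R hy2R hy3R n12 n23 n13 L12 L23 L13
  by_cases A1 : G.Adj x y1 <;> by_cases A2 : G.Adj x y2 <;> by_cases A3 : G.Adj x y3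
  · -- A1 A2 A3
    have nB12 : ¬G.Adj y1 y2 := by
      rcases E12 with ⟨_, _, h⟩ | ⟨_, h, _⟩ | ⟨h, _, _⟩
      · exact absurd A2 h
      · exact h
      · exact absurd A1 h
    have nB13 : ¬G.Adj y1 y3 := by
      rcases E13 with ⟨_, _, h⟩ | ⟨_, h, _⟩ | ⟨h, _, _⟩
      · exact absurd A3 h
      · exact h
      · exact absurd A1 h
    have nB23 : ¬G.Adj y2 y3 := by
      rcases E23 with ⟨_, _, h⟩ | ⟨_, h, _⟩ | ⟨h, _, _⟩
      · exact absurd A3 h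
      · exact h
      · exact absurd A2 h
    rcases EY with ⟨h, _, _⟩ | ⟨h, _, _⟩ | ⟨_, h, _⟩
    · exact nB12 h
    · exact nB12 h
    · exact nB23 h
  · -- A1 A2 ¬A3
    have B13 : G.Adj y1 y3 := by
      rcases E13 with ⟨_, h, _⟩ | ⟨_, _, h⟩ | ⟨h, _, _⟩
      · exact h
      · exact absurd h A3
      · exact absurd A1 h
    exact finalStep h3 hy2R hy3R nx2.symm n12.symm nx3.symm n13.symm A1 A2 B13 hp11 hp12
  · -- A1 ¬A2 A3
    have B12 : G.Adj y1 y2 := by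
      rcases E12 with ⟨_, h, _⟩ | ⟨_, _, h⟩ | ⟨h, _, _⟩
      · exact h
      · exact absurd h A2
      · exact absurd A1 h
    exact finalStep h3 hy3R hy2R nx3.symm n13.symm nx2.symm n12.symm A1 A3 B12 hp11 hp12
  · -- A1 ¬A2 ¬A3
    rcases E23 with ⟨h, _, _⟩ | ⟨h, _, _⟩ | ⟨_, _, h⟩
    · exact A2 h
    · exact A2 h
    · exact A3 h
  · -- ¬A1 A2 A3
    have B12 : G.Adj y1 y2 := by
      rcases E12 with ⟨h, _, _⟩ | ⟨h, _, _⟩ | ⟨_, h, _⟩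
      · exact absurd h A1
      · exact absurd h A1
      · exact h
    exact finalStep h3 hy3R hy1R nx3.symm n23.symm nx1.symm n12 A2 A3 B12.symm hp21 hp22
  · -- ¬A1 A2 ¬A3
    rcases E13 with ⟨h, _, _⟩ | ⟨h, _, _⟩ | ⟨_, _, h⟩
    · exact A1 h
    · exact A1 h
    · exact A3 h
  · -- ¬A1 ¬A2 A3
    rcases E12 with ⟨h, _, _⟩ | ⟨h, _, _⟩ | ⟨_, _, h⟩
    · exact A1 h
    · exact A1 h
    · exact A2 h
  · -- ¬A1 ¬A2 ¬A3
    rcases E12 with ⟨h, _, _⟩ | ⟨h, _, _⟩ | ⟨_, _, h⟩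
    · exact A1 h
    · exact A1 h
    · exact A2 h
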